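/- Let S be a well-centered extension ring of a commutative ring R, and let M be a maximal ideal of R such that MS ≠ S. Then MS is a maximal ideal of S. -/
import Mathlib


theorem stmt9 {S : Type*} [CommRing S] (R : Subring S)
    (hwc : ∀ s : S, ∃ u : Sˣ, (u : S) * s ∈ R)
    (M : Ideal R) (hM : M.IsMaximal)
    (hMS : Ideal.map R.subtype M ≠ ⊤) :
    (Ideal.map R.subtype M).IsMaximal := by
  rw [Ideal.isMaximal_iff]
  constructor
  · intro h1
    exact hMS ((Ideal.eq_top_iff_one _).mpr h1)
  · intro J x hle hx hxJ
    obtain ⟨u, hu⟩ := hwc x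
    set r : R := ⟨(u : S) * x, hu⟩ with hr
    have hrM : r ∉ M := by
      intro hrm
      apply hx
      have : (r : S) ∈ Ideal.map R.subtype M := Ideal.mem_map_of_mem _ hrm
      have hx' : x = ((u⁻¹ : Sˣ) : S) * ((r : S)) := by
        simp [hr, ← mul_assoc]
      rw [hx']
      exact Ideal.mul_mem_left _ _ this
    obtain ⟨a, m, hm, hamr⟩ := hM.exists_inv hrM
    have h1 : (1 : S) = (a : S) * ((u : S) * x) + (m : S) := by
      have := congrArg (R.subtype) hamr
      simpa using this.symm
    rw [h1]
    exact J.add_mem (by rw [← mul_assoc]; exact J.mul_mem_left _ hxJ)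
      (hle (Ideal.mem_map_of_mem _ hm))
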